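/- Every 2-almost-mixed free graph is a cograph (P4-free), and hence perfect; in particular, 2-almost-mixed free graphs satisfy χ = ω. -/

import Mathlib

section AuxCograph

open SimpleGraph

variable {V : Type*}

/-- P4-free predicate. -/
def P4Free (G : SimpleGraph V) : Prop :=
  ¬ ∃ a b c d : V, a ≠ b ∧ a ≠ c ∧ a ≠ d ∧ b ≠ c ∧ b ≠ d ∧ c ≠ d ∧
      G.Adj a b ∧ G.Adj b c ∧ G.Adj c d ∧
      ¬ G.Adj a c ∧ ¬ G.Adj a d ∧ ¬ G.Adj b d

/-- An independent finset. -/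
def IndepF (G : SimpleGraph V) (I : Finset V) : Prop :=
  ∀ u ∈ I, ∀ v ∈ I, u ≠ v → ¬ G.Adj u v

open Classical in
lemma key_dom [Fintype V] (G : SimpleGraph V) (hP4 : P4Free G) (I : Finset V)
    (hI : IndepF G I) (hImax : ∀ v ∉ I, ∃ i ∈ I, G.Adj i v)
    (K : Finset V) (hK : G.IsClique (K : Set V)) (hKI : ∀ v ∈ K, v ∉ I)
    (hKne : K.Nonempty) :
    ∃ i ∈ I, ∀ v ∈ K, G.Adj i v := by
  classical
  obtain ⟨k₀, hk₀⟩ := hKne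
  obtain ⟨i₁, hi₁I, _⟩ := hImax k₀ (hKI k₀ hk₀)
  have hIne : I.Nonempty := ⟨i₁, hi₁I⟩
  set f : V → ℕ := fun i => (K.filter (fun v => G.Adj i v)).card with hf
  obtain ⟨i₀, hi₀I, hi₀max⟩ := I.exists_max_image f hIne
  by_cases hall : ∀ v ∈ K, G.Adj i₀ v
  · exact ⟨i₀, hi₀I, hall⟩
  · exfalso
    push_neg at hall
    obtain ⟨k, hkK, hkadj⟩ := hall
    obtain ⟨i', hi'I, hi'k⟩ := hImax k (hKI k hkK)
    have hii' : i₀ ≠ i' := by rintro rfl; exact hkadj hi'k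
    -- find k' with Adj i₀ k' and ¬ Adj i' k'
    have hkey : ∃ k' ∈ K, G.Adj i₀ k' ∧ ¬ G.Adj i' k' := by
      by_contra hcon
      push_neg at hcon
      have hsub : K.filter (fun v => G.Adj i₀ v) ⊆ K.filter (fun v => G.Adj i' v) := by
        intro v hv
        rw [Finset.mem_filter] at hv ⊢
        exact ⟨hv.1, hcon v hv.1 hv.2⟩
      have hss : K.filter (fun v => G.Adj i₀ v) ⊂ K.filter (fun v => G.Adj i' v) := by
        refine ⟨hsub, fun h => ?_⟩
        have : k ∈ K.filter (fun v => G.Adj i₀ v) := h (Finset.mem_filter.2 ⟨hkK, hi'k⟩)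
        exact hkadj (Finset.mem_filter.1 this).2
      exact absurd (hi₀max i' hi'I) (not_le.2 (Finset.card_lt_card hss))
    obtain ⟨k', hk'K, hi₀k', hi'k'⟩ := hkey
    have hkk' : k ≠ k' := by rintro rfl; exact hkadj hi₀k'
    have hkk'adj : G.Adj k' k := hK hk'K hkK (Ne.symm hkk')
    -- P4 : i₀ - k' - k - i'
    refine hP4 ⟨i₀, k', k, i', G.ne_of_adj hi₀k', ?_, hii', hkk'.symm, ?_, ?_,
      hi₀k', hkk'adj, G.adj_symm hi'k, hkadj, ?_, fun h => hi'k' (G.adj_symm h)⟩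
    · exact fun h => hKI k hkK (by rwa [h] at hi₀I)
    · exact fun h => hKI k' hk'K (by rwa [← h] at hi'I)
    · exact fun h => hKI k hkK (by rwa [← h] at hi'I)
    · exact fun h => hI i₀ hi₀I i' hi'I hii' h

open Classical in
lemma exists_maxIndep [Fintype V] (G : SimpleGraph V) :
    ∃ I : Finset V, IndepF G I ∧ ∀ v ∉ I, ∃ i ∈ I, G.Adj i v := by
  classical
  have hne : (Finset.univ.filter (fun s : Finset V => IndepF G s)).Nonempty := by
    refine ⟨∅, ?_⟩
    exact Finset.mem_filter.2 ⟨Finset.mem_univ _, by simp [IndepF]⟩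
  obtain ⟨I, hImem, hImax⟩ :=
    (Finset.univ.filter (fun s : Finset V => IndepF G s)).exists_max_image
      (fun s => s.card) hne
  rw [Finset.mem_filter] at hImem
  refine ⟨I, hImem.2, fun v hv => ?_⟩
  by_contra hcon
  push_neg at hcon
  have hins : IndepF G (insert v I) := by
    intro a ha b hb hab
    rw [Finset.mem_insert] at ha hb
    rcases ha with rfl | ha
    · rcases hb with rfl | hb
      · exact absurd rfl hab
      · exact fun h => hcon b hb (G.adj_symm h)
    · rcases hb with rfl | hb
      · exact fun h => hcon a ha h
      · exact hImem.2 a ha b hb hab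
  have := hImax (insert v I) (Finset.mem_filter.2 ⟨Finset.mem_univ _, hins⟩)
  rw [Finset.card_insert_of_notMem hv] at this
  omega

lemma p4free_comap {W : Type*} (G : SimpleGraph V) (f : W → V) (hf : Function.Injective f)
    (h : P4Free G) : P4Free (G.comap f) := by
  rintro ⟨a, b, c, d, h1, h2, h3, h4, h5, h6, e1, e2, e3, n1, n2, n3⟩
  exact h ⟨f a, f b, f c, f d, fun q => h1 (hf q), fun q => h2 (hf q), fun q => h3 (hf q),
    fun q => h4 (hf q), fun q => h5 (hf q), fun q => h6 (hf q), e1, e2, e3, n1, n2, n3⟩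

lemma p4free_colorable : ∀ (k : ℕ) (V : Type*) [Fintype V] (G : SimpleGraph V),
    P4Free G → G.cliqueNum ≤ k → G.Colorable k := by
  intro k
  induction k with
  | zero =>
    intro V _ G _ hω
    have hV : IsEmpty V := by
      by_contra h
      rw [not_isEmpty_iff] at h
      obtain ⟨v⟩ := h
      have h1 : G.IsClique ({v} : Finset V) := by simp
      have := h1.card_le_cliqueNum
      simp at this
      omega
    exact ⟨Coloring.mk (fun v => (hV.false v).elim) (fun {v} => (hV.false v).elim)⟩
  | succ k ih =>
    intro V _ G hP4 hω
    classical
    obtain ⟨I, hI, hImax⟩ := exists_maxIndep G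
    set W := {v : V // v ∉ I}
    set G' : SimpleGraph W := G.comap Subtype.val with hG'
    have hP4' : P4Free G' := p4free_comap G _ Subtype.val_injective hP4
    have hω' : G'.cliqueNum ≤ k := by
      obtain ⟨s, hs⟩ := G'.exists_isNClique_cliqueNum
      by_cases hse : s.Nonempty
      · set K : Finset V := s.image Subtype.val with hKdef
        have hKcard : K.card = G'.cliqueNum := by
          rw [hKdef, Finset.card_image_of_injective _ Subtype.val_injective, hs.2]
        have hKclique : G.IsClique (K : Set V) := by
          intro a ha b hb hab
          simp only [hKdef, Finset.coe_image, Set.mem_image, Finset.mem_coe] at ha hb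
          obtain ⟨a', ha', rfl⟩ := ha
          obtain ⟨b', hb', rfl⟩ := hb
          exact hs.1 ha' hb' (fun q => hab (congrArg _ q))
        have hKI : ∀ v ∈ K, v ∉ I := by
          intro v hv
          simp only [hKdef, Finset.mem_image] at hv
          obtain ⟨⟨v', hv'⟩, _, rfl⟩ := hv
          exact hv'
        have hKne : K.Nonempty := hse.image _
        obtain ⟨i, hiI, hiadj⟩ := key_dom G hP4 I hI hImax K hKclique hKI hKne
        have hins : G.IsNClique (G'.cliqueNum + 1) (insert i K) := by
          refine IsNClique.insert ⟨hKclique, hKcard⟩ ?_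
          exact fun b hb => hiadj b hb
        have : G'.cliqueNum + 1 ≤ G.cliqueNum := by
          have := hins.isClique.card_le_cliqueNum
          rwa [hins.2] at this
        omega
      · rw [Finset.not_nonempty_iff_eq_empty] at hse
        subst hse
        have := hs.2
        simp at this
        omega
    obtain ⟨C'⟩ := ih W G' hP4' hω'
    refine ⟨Coloring.mk
      (fun v => if h : v ∈ I then Fin.last k else (C' ⟨v, h⟩).castSucc) ?_⟩
    intro v w hvw
    by_cases hv : v ∈ I <;> by_cases hw : w ∈ I <;> simp [hv, hw]
    · exact hI v hv w hw (G.ne_of_adj hvw) hvw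
    · exact fun h => (Fin.castSucc_lt_last _).ne' h
    · intro h
      exact C'.valid (show G'.Adj ⟨v, hv⟩ ⟨w, hw⟩ from hvw) h

end AuxCograph

section AuxMinor
open SimpleGraph
variable {V : Type*}

open SimpleGraph

variable {V : Type*}

set_option maxHeartbeats 1000000 in
lemma p4_partition_mixed (G : SimpleGraph V) (a b c d : V)
    (e1 : G.Adj a b) (e2 : G.Adj b c) (e3 : G.Adj c d)
    (n1 : ¬ G.Adj a c) (n2 : ¬ G.Adj a d) (n3 : ¬ G.Adj b d)
    (u v w x : V)
    (hu : u = a ∨ u = b ∨ u = c ∨ u = d) (hv : v = a ∨ v = b ∨ v = c ∨ v = d)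
    (hw : w = a ∨ w = b ∨ w = c ∨ w = d) (hx : x = a ∨ x = b ∨ x = c ∨ x = d)
    (huv : u ≠ v) (huw : u ≠ w) (hux : u ≠ x) (hvw : v ≠ w) (hvx : v ≠ x) (hwx : w ≠ x) :
    (¬(G.Adj u w ↔ G.Adj u x) ∨ ¬(G.Adj v w ↔ G.Adj v x)) ∧
    (¬(G.Adj u w ↔ G.Adj v w) ∨ ¬(G.Adj u x ↔ G.Adj v x)) := by
  have e1' : G.Adj b a := G.adj_symm e1
  have e2' : G.Adj c b := G.adj_symm e2
  have e3' : G.Adj d c := G.adj_symm e3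
  have n1' : ¬ G.Adj c a := fun h => n1 (G.adj_symm h)
  have n2' : ¬ G.Adj d a := fun h => n2 (G.adj_symm h)
  have n3' : ¬ G.Adj d b := fun h => n3 (G.adj_symm h)
  rcases hu with rfl | rfl | rfl | rfl <;> rcases hv with rfl | rfl | rfl | rfl <;>
    rcases hw with rfl | rfl | rfl | rfl <;> rcases hx with rfl | rfl | rfl | rfl <;>
    first
    | exact (huv rfl).elim
    | exact (huw rfl).elim
    | exact (hux rfl).elim
    | exact (hvw rfl).elim
    | exact (hvx rfl).elim
    | exact (hwx rfl).elim
    | tauto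

end AuxMinor

def ZoneHorizontal {m n : ℕ} (M : Matrix (Fin m) (Fin n) (Fin 3))
    (R : Fin m → Prop) (C : Fin n → Prop) : Prop :=
  ∀ i, R i → ∀ j j', C j → C j' → M i j = M i j'

def ZoneVertical {m n : ℕ} (M : Matrix (Fin m) (Fin n) (Fin 3))
    (R : Fin m → Prop) (C : Fin n → Prop) : Prop :=
  ∀ j, C j → ∀ i i', R i → R i' → M i j = M i' j

/-- A zone is mixed if it is neither horizontal nor vertical, or if it has at
least two rows and two columns and contains a `*` (= `2`) entry. -/
def ZoneMixed {m n : ℕ} (M : Matrix (Fin m) (Fin n) (Fin 3))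
    (R : Fin m → Prop) (C : Fin n → Prop) : Prop :=
  (¬ ZoneHorizontal M R C ∧ ¬ ZoneVertical M R C) ∨
    ((∃ i i', R i ∧ R i' ∧ i ≠ i') ∧ (∃ j j', C j ∧ C j' ∧ j ≠ j') ∧
      ∃ i j, R i ∧ C j ∧ M i j = 2)

/-- A matrix has a `d`-almost mixed minor if it has a `d`-division (monotone
surjective block maps on rows and columns) all of whose off-diagonal zones are
mixed. -/
def HasAlmostMixedMinor {n : ℕ} (M : Matrix (Fin n) (Fin n) (Fin 3)) (d : ℕ) : Prop :=
  ∃ (r : Fin n → Fin d) (c : Fin n → Fin d),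
    Monotone r ∧ Monotone c ∧ Function.Surjective r ∧ Function.Surjective c ∧
    ∀ i j : Fin d, i ≠ j → ZoneMixed M (fun x => r x = i) (fun y => c y = j)

open Classical in
/-- The adjacency matrix of the graph `G` under the vertex ordering
`σ 0, σ 1, …`, with `*` (= `2`) on the diagonal. -/
noncomputable def adjMat {n : ℕ} (G : SimpleGraph (Fin n)) (σ : Equiv.Perm (Fin n)) :
    Matrix (Fin n) (Fin n) (Fin 3) :=
  fun i j => if i = j then 2 else if G.Adj (σ i) (σ j) then 1 else 0

/-- A graph is `d`-almost mixed free if its vertices can be ordered so that its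
adjacency matrix has no `d`-almost mixed minor. -/
def AlmostMixedFree {n : ℕ} (G : SimpleGraph (Fin n)) (d : ℕ) : Prop :=
  ∃ σ : Equiv.Perm (Fin n), ¬ HasAlmostMixedMinor (adjMat G σ) d

section AuxMinor2
open SimpleGraph

open Classical in
lemma ite_ne_ite {P Q : Prop} (h : ¬ (P ↔ Q)) :
    (if P then (1 : Fin 3) else 0) ≠ (if Q then (1 : Fin 3) else 0) := by
  by_cases hP : P <;> by_cases hQ : Q <;> simp [hP, hQ] at h ⊢ <;> tauto

lemma adjMat_symm {n : ℕ} (G : SimpleGraph (Fin n)) (σ : Equiv.Perm (Fin n))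
    (i j : Fin n) : adjMat G σ i j = adjMat G σ j i := by
  by_cases h : i = j
  · subst h; rfl
  · simp only [adjMat, if_neg h, if_neg (Ne.symm h)]
    rw [G.adj_comm]

open Classical in
lemma adjMat_off {n : ℕ} (G : SimpleGraph (Fin n)) (σ : Equiv.Perm (Fin n))
    {i j : Fin n} (h : i ≠ j) :
    adjMat G σ i j = if G.Adj (σ i) (σ j) then 1 else 0 := by
  simp only [adjMat, if_neg h]

/-- From four ordered positions whose cross 2×2 submatrix is "mixed" in both
directions, build a 2-almost mixed minor. -/
lemma minor_of_four {n : ℕ} (M : Matrix (Fin n) (Fin n) (Fin 3))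
    (hsym : ∀ i j, M i j = M j i)
    (q1 q2 q3 q4 : Fin n) (h12 : q1 < q2) (h23 : q2 < q3) (h34 : q3 < q4)
    (hrow : M q1 q3 ≠ M q1 q4 ∨ M q2 q3 ≠ M q2 q4)
    (hcol : M q1 q3 ≠ M q2 q3 ∨ M q1 q4 ≠ M q2 q4) :
    HasAlmostMixedMinor M 2 := by
  classical
  set r : Fin n → Fin 2 := fun x => if x ≤ q2 then 0 else 1 with hr
  have hmono : Monotone r := by
    intro x y hxy
    simp only [hr]
    by_cases hy : y ≤ q2
    · rw [if_pos (le_trans hxy hy), if_pos hy]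
    · by_cases hx : x ≤ q2
      · rw [if_pos hx, if_neg hy]; decide
      · rw [if_neg hx, if_neg hy]
  have hrq1 : r q1 = 0 := by simp [hr, (h12.le)]
  have hrq2 : r q2 = 0 := by simp [hr]
  have hrq3 : r q3 = 1 := by simp [hr, not_le.2 h23]
  have hrq4 : r q4 = 1 := by simp [hr, not_le.2 (h23.trans h34)]
  have hsurj : Function.Surjective r := by
    intro i
    fin_cases i
    · exact ⟨q1, hrq1⟩
    · exact ⟨q3, hrq3⟩
  refine ⟨r, r, hmono, hmono, hsurj, hsurj, ?_⟩
  intro i j hij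
  have hz01 : ZoneMixed M (fun x => r x = 0) (fun y => r y = 1) := by
    left
    constructor
    · intro h
      rcases hrow with hc | hc
      · exact hc (h q1 hrq1 q3 q4 hrq3 hrq4)
      · exact hc (h q2 hrq2 q3 q4 hrq3 hrq4)
    · intro h
      rcases hcol with hc | hc
      · exact hc (h q3 hrq3 q1 q2 hrq1 hrq2)
      · exact hc (h q4 hrq4 q1 q2 hrq1 hrq2)
  have hz10 : ZoneMixed M (fun x => r x = 1) (fun y => r y = 0) := by
    left
    constructor
    · intro h
      rcases hcol with hc | hc
      · exact hc (by rw [hsym q1 q3, hsym q2 q3]; exact h q3 hrq3 q1 q2 hrq1 hrq2)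
      · exact hc (by rw [hsym q1 q4, hsym q2 q4]; exact h q4 hrq4 q1 q2 hrq1 hrq2)
    · intro h
      rcases hrow with hc | hc
      · exact hc (by rw [hsym q1 q3, hsym q1 q4]; exact h q1 hrq1 q3 q4 hrq3 hrq4)
      · exact hc (by rw [hsym q2 q3, hsym q2 q4]; exact h q2 hrq2 q3 q4 hrq3 hrq4)
  fin_cases i <;> fin_cases j <;> simp_all <;> first
  | exact hz01
  | exact hz10

lemma p4_hasMinor {n : ℕ} (G : SimpleGraph (Fin n)) (σ : Equiv.Perm (Fin n))
    (a b c d : Fin n) (hab : a ≠ b) (hac : a ≠ c) (had : a ≠ d) (hbc : b ≠ c)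
    (hbd : b ≠ d) (hcd : c ≠ d)
    (e1 : G.Adj a b) (e2 : G.Adj b c) (e3 : G.Adj c d)
    (n1 : ¬ G.Adj a c) (n2 : ¬ G.Adj a d) (n3 : ¬ G.Adj b d) :
    HasAlmostMixedMinor (adjMat G σ) 2 := by
  classical
  set p : Fin n → Fin n := fun v => σ.symm v with hp
  have hpinj : Function.Injective p := σ.symm.injective
  set s : Finset (Fin n) := {p a, p b, p c, p d} with hs
  have hcard : s.card = 4 := by
    rw [hs]
    rw [Finset.card_insert_of_notMem (by
      simp only [Finset.mem_insert, Finset.mem_singleton]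
      push_neg
      exact ⟨fun h => hab (hpinj h), fun h => hac (hpinj h), fun h => had (hpinj h)⟩)]
    rw [Finset.card_insert_of_notMem (by
      simp only [Finset.mem_insert, Finset.mem_singleton]
      push_neg
      exact ⟨fun h => hbc (hpinj h), fun h => hbd (hpinj h)⟩)]
    rw [Finset.card_insert_of_notMem (by
      simp only [Finset.mem_singleton]
      exact fun h => hcd (hpinj h))]
    rfl
  set e := s.orderIsoOfFin hcard with he
  set q : Fin 4 → Fin n := fun i => (e i : Fin n) with hqdef
  have hqmono : StrictMono q := fun i j hij => by
    exact_mod_cast e.strictMono hij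
  have hqmem : ∀ i, q i = p a ∨ q i = p b ∨ q i = p c ∨ q i = p d := by
    intro i
    have h2 : q i ∈ ({p a, p b, p c, p d} : Finset (Fin n)) := (e i).2
    simpa [Finset.mem_insert, Finset.mem_singleton] using h2
  -- the vertices in sorted position order
  set v : Fin 4 → Fin n := fun i => σ (q i) with hv
  have hvmem : ∀ i, v i = a ∨ v i = b ∨ v i = c ∨ v i = d := by
    intro i
    rcases hqmem i with h | h | h | h <;> simp [hv, hp, h]
  have hvinj : ∀ i j : Fin 4, i ≠ j → v i ≠ v j := by
    intro i j hij h
    exact hij (hqmono.injective (σ.injective h))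
  have hmix := p4_partition_mixed G a b c d e1 e2 e3 n1 n2 n3
    (v 0) (v 1) (v 2) (v 3) (hvmem 0) (hvmem 1) (hvmem 2) (hvmem 3)
    (hvinj 0 1 (by decide)) (hvinj 0 2 (by decide)) (hvinj 0 3 (by decide))
    (hvinj 1 2 (by decide)) (hvinj 1 3 (by decide)) (hvinj 2 3 (by decide))
  have hqne : ∀ i j : Fin 4, i ≠ j → q i ≠ q j := fun i j hij h => hij (hqmono.injective h)
  have hM : ∀ (i j : Fin 4), i ≠ j →
      adjMat G σ (q i) (q j) = if G.Adj (v i) (v j) then 1 else 0 := by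
    intro i j hij
    exact adjMat_off G σ (hqne i j hij)
  apply minor_of_four (adjMat G σ) (adjMat_symm G σ) (q 0) (q 1) (q 2) (q 3)
    (hqmono (by decide)) (hqmono (by decide)) (hqmono (by decide))
  · rw [hM 0 2 (by decide), hM 0 3 (by decide), hM 1 2 (by decide), hM 1 3 (by decide)]
    rcases hmix.1 with h | h
    · exact Or.inl (ite_ne_ite h)
    · exact Or.inr (ite_ne_ite h)
  · rw [hM 0 2 (by decide), hM 0 3 (by decide), hM 1 2 (by decide), hM 1 3 (by decide)]
    rcases hmix.2 with h | h
    · exact Or.inl (ite_ne_ite h)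
    · exact Or.inr (ite_ne_ite h)

end AuxMinor2

/-- Every 2-almost-mixed free graph is a cograph (it has no induced `P₄`),
hence perfect; in particular it satisfies `χ = ω`. -/
theorem almostMixedFree_two_cograph {n : ℕ} (G : SimpleGraph (Fin n))
    (hG : AlmostMixedFree G 2) :
    (¬ ∃ a b c d : Fin n, a ≠ b ∧ a ≠ c ∧ a ≠ d ∧ b ≠ c ∧ b ≠ d ∧ c ≠ d ∧
      G.Adj a b ∧ G.Adj b c ∧ G.Adj c d ∧
      ¬ G.Adj a c ∧ ¬ G.Adj a d ∧ ¬ G.Adj b d) ∧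
    G.chromaticNumber = (G.cliqueNum : ℕ∞) := by
  obtain ⟨σ, hσ⟩ := hG
  have hnoP4 : ¬ ∃ a b c d : Fin n, a ≠ b ∧ a ≠ c ∧ a ≠ d ∧ b ≠ c ∧ b ≠ d ∧ c ≠ d ∧
      G.Adj a b ∧ G.Adj b c ∧ G.Adj c d ∧
      ¬ G.Adj a c ∧ ¬ G.Adj a d ∧ ¬ G.Adj b d := by
    rintro ⟨a, b, c, d, h1, h2, h3, h4, h5, h6, e1, e2, e3, m1, m2, m3⟩
    exact hσ (p4_hasMinor G σ a b c d h1 h2 h3 h4 h5 h6 e1 e2 e3 m1 m2 m3)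
  refine ⟨hnoP4, ?_⟩
  have hP4 : P4Free G := hnoP4
  refine le_antisymm ?_ ?_
  · exact (p4free_colorable G.cliqueNum (Fin n) G hP4 le_rfl).chromaticNumber_le
  · obtain ⟨s, hs⟩ := G.exists_isNClique_cliqueNum
    have h := hs.1.card_le_chromaticNumber
    rwa [hs.2] at h
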